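/- Let Γ act on a group G by automorphisms and N a Γ-stable normal subgroup. If both H¹(Γ, G/N) is finite and, for every 1-cocycle Φ : Γ → G, the twisted cohomology set H¹(Γ_Φ, N) is finite, then H¹(Γ, G) is finite. -/
import Mathlib


universe u

def IsCocycle {Γ G : Type*} [Group Γ] [Group G] [MulDistribMulAction Γ G]
    (Φ : Γ → G) : Prop :=
  ∀ σ τ : Γ, Φ (σ * τ) = Φ σ * σ • Φ τ

def Cohomologous {Γ G : Type*} [Group Γ] [Group G] [MulDistribMulAction Γ G]
    (Φ Ψ : Γ → G) : Prop :=
  ∃ b : G, ∀ σ : Γ, Ψ σ = b⁻¹ * Φ σ * σ • b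

/-- A cocycle with values in `G/N`, represented by a lift `Γ → G`. -/
def CocycleModN {Γ G : Type*} [Group Γ] [Group G] [MulDistribMulAction Γ G]
    (N : Subgroup G) (Φ : Γ → G) : Prop :=
  ∀ σ τ : Γ, (Φ (σ * τ))⁻¹ * (Φ σ * σ • Φ τ) ∈ N

/-- The cohomologous relation for `G/N`-valued cocycles, via lifts. -/
def CohomologousModN {Γ G : Type*} [Group Γ] [Group G] [MulDistribMulAction Γ G]
    (N : Subgroup G) (Φ Ψ : Γ → G) : Prop :=
  ∃ b : G, ∀ σ : Γ, (Ψ σ)⁻¹ * (b⁻¹ * Φ σ * σ • b) ∈ N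

/-- A cocycle for the `Φ`-twisted action, valued in `N`. -/
def TwCocycleN {Γ G : Type*} [Group Γ] [Group G] [MulDistribMulAction Γ G]
    (Φ : Γ → G) (N : Subgroup G) (Ψ : Γ → G) : Prop :=
  (∀ σ : Γ, Ψ σ ∈ N) ∧ ∀ σ τ : Γ, Ψ (σ * τ) = Ψ σ * (Φ σ * σ • Ψ τ * (Φ σ)⁻¹)

/-- Cohomologous (via an element of `N`) for the `Φ`-twisted action. -/
def TwCohomologousN {Γ G : Type*} [Group Γ] [Group G] [MulDistribMulAction Γ G]
    (Φ : Γ → G) (N : Subgroup G) (Ψ Λ : Γ → G) : Prop :=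
  ∃ b ∈ N, ∀ σ : Γ, Λ σ = b⁻¹ * Ψ σ * (Φ σ * σ • b * (Φ σ)⁻¹)

/-- `H¹(Γ,G)`. -/
def H1 (Γ G : Type u) [Group Γ] [Group G] [MulDistribMulAction Γ G] : Type u :=
  Quot (fun Φ Ψ : {f : Γ → G // IsCocycle f} => Cohomologous Φ.1 Ψ.1)

/-- `H¹(Γ,G/N)` (via lifted cocycles). -/
def H1modN (Γ : Type u) {G : Type u} [Group Γ] [Group G] [MulDistribMulAction Γ G]
    (N : Subgroup G) : Type u :=
  Quot (fun Φ Ψ : {f : Γ → G // CocycleModN N f} => CohomologousModN N Φ.1 Ψ.1)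

/-- `H¹(Γ_Φ,N)`, the twisted cohomology set. -/
def H1twN {Γ G : Type u} [Group Γ] [Group G] [MulDistribMulAction Γ G]
    (Φ : Γ → G) (N : Subgroup G) : Type u :=
  Quot (fun Ψ Λ : {f : Γ → G // TwCocycleN Φ N f} => TwCohomologousN Φ N Ψ.1 Λ.1)

section Aux

variable {Γ G : Type u} [Group Γ] [Group G] [MulDistribMulAction Γ G]

private lemma cocycleModN_of {Φ : Γ → G} (h : IsCocycle Φ) (N : Subgroup G) :
    CocycleModN N Φ := fun σ τ => by
  rw [h σ τ, inv_mul_cancel]; exact one_mem N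

private lemma equivModN (N : Subgroup G) [hN : N.Normal] :
    Equivalence (fun Φ Ψ : {f : Γ → G // CocycleModN N f} =>
      CohomologousModN N Φ.1 Ψ.1) := by
  constructor
  · intro Φ; exact ⟨1, fun σ => by simpa using one_mem N⟩
  · rintro Φ Ψ ⟨b, hb⟩
    refine ⟨b⁻¹, fun σ => ?_⟩
    have key : (Φ.1 σ)⁻¹ * (b⁻¹⁻¹ * Ψ.1 σ * σ • b⁻¹)
        = (σ • b) * ((Ψ.1 σ)⁻¹ * (b⁻¹ * Φ.1 σ * σ • b))⁻¹ * (σ • b)⁻¹ := by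
      rw [smul_inv']; group
    rw [key]
    exact hN.conj_mem _ (inv_mem (hb σ)) _
  · rintro Φ Ψ X ⟨b, hb⟩ ⟨c, hc⟩
    refine ⟨b * c, fun σ => ?_⟩
    have key : (X.1 σ)⁻¹ * ((b * c)⁻¹ * Φ.1 σ * σ • (b * c))
        = ((X.1 σ)⁻¹ * (c⁻¹ * Ψ.1 σ * σ • c)) *
          ((σ • c)⁻¹ * ((Ψ.1 σ)⁻¹ * (b⁻¹ * Φ.1 σ * σ • b)) * (σ • c)) := by
      rw [smul_mul']; group
    rw [key]
    exact mul_mem (hc σ) (hN.conj_mem' _ (hb σ) _)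

/-- The natural map `H¹(Γ,G) → H¹(Γ,G/N)`. -/
private def toModN (N : Subgroup G) : H1 Γ G → H1modN Γ N :=
  Quot.lift (fun Φ => Quot.mk _ ⟨Φ.1, cocycleModN_of Φ.2 N⟩)
    (by
      rintro Φ Ψ ⟨b, hb⟩
      apply Quot.sound
      exact ⟨b, fun σ => by rw [hb σ, inv_mul_cancel]; exact one_mem N⟩)

end Aux

/-- If `H¹(Γ,G/N)` is finite and `H¹(Γ_Φ,N)` is finite for every 1-cocycle
`Φ : Γ → G`, then `H¹(Γ,G)` is finite. -/
theorem finite_H1 {Γ G : Type u} [Group Γ] [Group G] [MulDistribMulAction Γ G]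
    (N : Subgroup G) [N.Normal] (hstab : ∀ (σ : Γ), ∀ n ∈ N, σ • n ∈ N)
    (h1 : Finite (H1modN Γ N))
    (h2 : ∀ Φ : Γ → G, IsCocycle Φ → Finite (H1twN Φ N)) :
    Finite (H1 Γ G) := by
  classical
  have hN : N.Normal := ‹N.Normal›
  -- each fibre of `toModN N` is finite
  have hfib : ∀ b : H1modN Γ N, Finite {a : H1 Γ G // toModN N a = b} := by
    intro b
    by_cases hne : Nonempty {a : H1 Γ G // toModN N a = b}
    · obtain ⟨a₀, ha₀⟩ := hne
      obtain ⟨Φ, hΦ⟩ := Quot.exists_rep a₀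
      -- the map from twisted cocycles to the fibre
      have hmem : ∀ (Ψ : {f : Γ → G // TwCocycleN Φ.1 N f}),
          IsCocycle (fun σ => Ψ.1 σ * Φ.1 σ) := by
        rintro ⟨Ψ, hΨN, hΨ⟩ σ τ
        simp only [hΨ σ τ, Φ.2 σ τ, smul_mul']
        group
      have hfibval : ∀ (Ψ : {f : Γ → G // TwCocycleN Φ.1 N f}),
          toModN N (Quot.mk _ (⟨fun σ => Ψ.1 σ * Φ.1 σ, hmem Ψ⟩ :
            {f : Γ → G // IsCocycle f})) = b := by
        intro Ψ
        rw [← ha₀, ← hΦ]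
        show Quot.mk _ _ = Quot.mk _ _
        apply Quot.sound
        refine ⟨1, fun σ => ?_⟩
        have key : (Φ.1 σ)⁻¹ * ((1 : G)⁻¹ * (Ψ.1 σ * Φ.1 σ) * σ • (1 : G))
            = (Φ.1 σ)⁻¹ * Ψ.1 σ * Φ.1 σ := by rw [smul_one]; group
        rw [key]
        exact hN.conj_mem' _ (Ψ.2.1 σ) _
      let f : H1twN Φ.1 N → {a : H1 Γ G // toModN N a = b} :=
        Quot.lift
          (fun Ψ => ⟨Quot.mk _ ⟨fun σ => Ψ.1 σ * Φ.1 σ, hmem Ψ⟩, hfibval Ψ⟩)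
          (by
            rintro Ψ Λ ⟨c, hcN, hc⟩
            apply Subtype.ext
            apply Quot.sound
            refine ⟨c, fun σ => ?_⟩
            show Λ.1 σ * Φ.1 σ = c⁻¹ * (Ψ.1 σ * Φ.1 σ) * σ • c
            rw [hc σ]; group)
      have hsurj : Function.Surjective f := by
        rintro ⟨a, ha⟩
        obtain ⟨Φ', hΦ'⟩ := Quot.exists_rep a
        -- `Φ'` and `Φ` are cohomologous mod `N`
        have heq : CohomologousModN N Φ'.1 Φ.1 := by
          have : (Quot.mk _ (⟨Φ'.1, cocycleModN_of Φ'.2 N⟩ :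
                {f : Γ → G // CocycleModN N f}) :
              Quot (fun Φ Ψ : {f : Γ → G // CocycleModN N f} =>
                CohomologousModN N Φ.1 Ψ.1))
              = Quot.mk _ ⟨Φ.1, cocycleModN_of Φ.2 N⟩ := by
            show toModN N (Quot.mk _ Φ') = toModN N (Quot.mk _ Φ)
            rw [hΦ', hΦ, ha, ha₀]
          exact ((equivModN N).eqvGen_iff).mp (Quot.eq.mp this)
        obtain ⟨c, hc⟩ := heq
        refine ⟨Quot.mk _ ⟨fun σ => c⁻¹ * Φ'.1 σ * σ • c * (Φ.1 σ)⁻¹, ?_, ?_⟩, ?_⟩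
        · intro σ
          show c⁻¹ * Φ'.1 σ * σ • c * (Φ.1 σ)⁻¹ ∈ N
          have key : c⁻¹ * Φ'.1 σ * σ • c * (Φ.1 σ)⁻¹
              = Φ.1 σ * ((Φ.1 σ)⁻¹ * (c⁻¹ * Φ'.1 σ * σ • c)) * (Φ.1 σ)⁻¹ := by
            group
          rw [key]
          exact hN.conj_mem _ (hc σ) _
        · intro σ τ
          simp only [Φ'.2 σ τ, Φ.2 σ τ, smul_mul', smul_inv', mul_smul]
          group
        · simp only [f]
          apply Subtype.ext
          show Quot.mk _ _ = a
          rw [← hΦ']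
          apply Quot.sound
          refine ⟨c⁻¹, fun σ => ?_⟩
          show Φ'.1 σ = c⁻¹⁻¹ * (c⁻¹ * Φ'.1 σ * σ • c * (Φ.1 σ)⁻¹ * Φ.1 σ)
              * σ • c⁻¹
          rw [smul_inv']; group
      have := h2 Φ.1 Φ.2
      exact Finite.of_surjective f hsurj
    · rw [not_nonempty_iff] at hne
      exact Finite.of_subsingleton
  -- package into a sigma type
  haveI : ∀ b : H1modN Γ N, Finite {a : H1 Γ G // toModN N a = b} := hfib
  have key : Function.Injective
      (fun a : H1 Γ G =>
        (⟨toModN N a, a, rfl⟩ : Σ b : H1modN Γ N, {a : H1 Γ G // toModN N a = b})) := by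
    have : Function.LeftInverse
        (fun s : Σ b : H1modN Γ N, {a : H1 Γ G // toModN N a = b} => s.2.1)
        (fun a : H1 Γ G => (⟨toModN N a, a, rfl⟩ :
          Σ b : H1modN Γ N, {a : H1 Γ G // toModN N a = b})) := fun a => rfl
    exact this.injective
  exact Finite.of_injective _ key
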